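/- Let I be a finite type with functions inv, resp : I → ℝ satisfying inv(a) ≤ resp(a) for all a, and define a → b iff resp(a) < inv(b). Let S be a subset of I and let r₀ be a strict linear order on S such that for all a, b ∈ S, a → b implies r₀ a b. Then there exists a strict linear order r on all of I such that (i) for all a, b ∈ S, r a b iff r₀ a b, and (ii) for all a, b ∈ I, a → b implies r a b. -/

import Mathlib

/-- Linearization insertion: let `I` be a finite type of operation instances with
invocation and response times `inv, resp : I → ℝ` satisfying `inv a ≤ resp a`, and
say `a` precedes `b` in real time iff `resp a < inv b`. Given a subset `S ⊆ I` and a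
strict linear order `r₀` on `S` such that real-time precedence between members of
`S` implies `r₀`, there is a strict linear order `r` on all of `I` agreeing with
`r₀` on `S` and such that real-time precedence between any two instances implies
`r`. -/
theorem linearization_extension {I : Type*} [Finite I] (inv resp : I → ℝ)
    (hir : ∀ a, inv a ≤ resp a) (S : Set I) (r₀ : S → S → Prop)
    (hr₀ : IsStrictTotalOrder S r₀)
    (hrt₀ : ∀ a b : S, resp a.1 < inv b.1 → r₀ a b) :
    ∃ r : I → I → Prop, IsStrictTotalOrder I r ∧
      (∀ a b : S, (r a.1 b.1 ↔ r₀ a b)) ∧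
      (∀ a b : I, resp a < inv b → r a b) := by
  classical
  haveI := hr₀
  have r₀trans : ∀ {a b c : S}, r₀ a b → r₀ b c → r₀ a c := fun h1 h2 =>
    hr₀.trans _ _ _ h1 h2
  have r₀irrefl : ∀ a : S, ¬ r₀ a a := fun a => hr₀.irrefl a
  have r₀asymm : ∀ {a b : S}, r₀ a b → ¬ r₀ b a := fun h1 h2 =>
    r₀irrefl _ (r₀trans h1 h2)
  -- base relation
  set q : I → I → Prop := fun a b =>
    resp a < inv b ∨ ∃ (ha : a ∈ S) (hb : b ∈ S), r₀ ⟨a, ha⟩ ⟨b, hb⟩ with hq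
  -- RT transitivity
  have RTtrans : ∀ {a b c : I}, resp a < inv b → resp b < inv c → resp a < inv c :=
    fun h1 h2 => h1.trans_le ((hir _).trans h2.le)
  -- path normal form
  set P : I → I → Prop := fun a b =>
    resp a < inv b ∨ ∃ s t : S, (resp a < inv s.1 ∨ a = s.1) ∧ r₀ s t ∧
      (resp t.1 < inv b ∨ t.1 = b) with hP
  have hTG : ∀ {a b : I}, Relation.TransGen q a b → P a b := by
    intro a b h
    induction h with
    | single h =>
      rename_i c
      rcases h with h | ⟨ha, hc, h⟩
      · exact Or.inl h
      · exact Or.inr ⟨⟨a, ha⟩, ⟨c, hc⟩, Or.inr rfl, h, Or.inr rfl⟩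
    | tail _ h ih =>
      rename_i b' c _
      rcases h with h | ⟨hb', hc, h⟩
      · rcases ih with ih | ⟨s, t, hs, hst, ht⟩
        · exact Or.inl (RTtrans ih h)
        · refine Or.inr ⟨s, t, hs, hst, Or.inl ?_⟩
          rcases ht with ht | ht
          · exact RTtrans ht h
          · exact ht ▸ h
      · rcases ih with ih | ⟨s, t, hs, hst, ht⟩
        · exact Or.inr ⟨⟨b', hb'⟩, ⟨c, hc⟩, Or.inl ih, h, Or.inr rfl⟩
        · refine Or.inr ⟨s, ⟨c, hc⟩, hs, ?_, Or.inr rfl⟩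
          rcases ht with ht | ht
          · exact r₀trans hst (r₀trans (hrt₀ t ⟨b', hb'⟩ ht) h)
          · have : t = ⟨b', hb'⟩ := Subtype.ext ht
            exact r₀trans hst (this ▸ h)
  have Pirrefl : ∀ a : I, ¬ P a a := by
    intro a h
    rcases h with h | ⟨s, t, hs, hst, ht⟩
    · exact absurd (h.trans_le (hir a)) (lt_irrefl _)
    · rcases hs with hs | hs <;> rcases ht with ht | ht
      · exact r₀asymm hst (hrt₀ t s (RTtrans ht hs))
      · exact r₀asymm hst (hrt₀ t s (ht ▸ hs))
      · exact r₀asymm hst (hrt₀ t s (hs ▸ ht))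
      · exact r₀irrefl s (by
          have : s = t := Subtype.ext (hs.symm.trans ht.symm)
          exact this ▸ hst)
  have TGirrefl : ∀ a : I, ¬ Relation.TransGen q a a := fun a h => Pirrefl a (hTG h)
  -- nonstrict partial order
  set p : I → I → Prop := fun a b => Relation.TransGen q a b ∨ a = b with hp
  haveI : IsPartialOrder I p :=
    { refl := fun a => Or.inr rfl
      trans := by
        rintro a b c (h1 | rfl) (h2 | rfl)
        · exact Or.inl (h1.trans h2)
        · exact Or.inl h1
        · exact Or.inl h2
        · exact Or.inr rfl
      antisymm := by
        rintro a b (h1 | rfl) (h2 | h2)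
        · exact absurd (h1.trans h2) (TGirrefl a)
        · exact h2.symm
        · rfl
        · rfl }
  obtain ⟨ls, hls, hps⟩ := extend_partialOrder p
  refine ⟨fun a b => ls a b ∧ a ≠ b, ?_, ?_, ?_⟩
  · exact
      { irrefl := fun a h => h.2 rfl
        trans := by
          rintro a b c ⟨h1, h1'⟩ ⟨h2, h2'⟩
          refine ⟨hls.trans _ _ _ h1 h2, ?_⟩
          rintro rfl
          exact h1' (hls.antisymm _ _ h1 h2)
        trichotomous := by
          intro a b h1 h2
          by_contra h
          rcases hls.total a b with h3 | h3
          · exact h1 ⟨h3, h⟩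
          · exact h2 ⟨h3, Ne.symm h⟩ }
  · -- agreement on S
    have fwd : ∀ a b : S, r₀ a b → ls a.1 b.1 ∧ a.1 ≠ b.1 := by
      intro a b h
      have hq' : q a.1 b.1 := Or.inr ⟨a.2, b.2, h⟩
      have htg : Relation.TransGen q a.1 b.1 := Relation.TransGen.single hq'
      refine ⟨hps _ _ (Or.inl htg), ?_⟩
      rintro he
      exact TGirrefl a.1 (he ▸ htg)
    intro a b
    constructor
    · rintro ⟨h1, h2⟩
      rcases trichotomous_of r₀ a b with h | h | h
      · exact h
      · exact absurd (congrArg Subtype.val h) h2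
      · obtain ⟨h3, _⟩ := fwd b a h
        exact absurd (hls.antisymm _ _ h1 h3) h2
    · exact fwd a b
  · intro a b h
    have htg : Relation.TransGen q a b := Relation.TransGen.single (Or.inl h)
    refine ⟨hps _ _ (Or.inl htg), ?_⟩
    rintro rfl
    exact TGirrefl a htg
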